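/- Let 0 < α < 1 and k_α satisfy k_α(x,y) ≤ C d(x,y)^{α-N} and |k_α(x,z)-k_α(y,z)| ≤ C d(x,y)(min(d(x,z),d(y,z)))^{-(N+1-α)}, with ∫ k_α(x,·)dm = 1. If f = J_α g (i.e. f(x) = ∫ g(z)k_α(x,z)dm(z)) with g locally integrable and f finite a.e., then |f(x)-f(y)| ≤ C' d(x,y)^α (Mg(x)+Mg(y)) for almost every pair x,y, where M is the Hardy–Littlewood maximal operator. -/

import Mathlib

open MeasureTheory Metric ENNReal

/-- The (centered) Hardy–Littlewood maximal function, valued in `ℝ≥0∞`. -/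
noncomputable def maximalFn {X : Type*} [MetricSpace X] [MeasurableSpace X]
    (m : MeasureTheory.Measure X) (g : X → ℝ) (x : X) : ℝ≥0∞ :=
  ⨆ (r : ℝ) (_ : 0 < r),
    (m (Metric.ball x r))⁻¹ * ∫⁻ y in Metric.ball x r, ENNReal.ofReal |g y| ∂m

/-- A measure with Ahlfors upper bound has null singletons. -/
lemma null_single {X : Type*} [MetricSpace X] [MeasurableSpace X]
    (m : Measure X) (N c2 : ℝ) (hN : 0 < N) (hc2 : 0 < c2) (w : X)
    (hub : ∀ r : ℝ, 0 < r → m (ball w r) ≤ ENNReal.ofReal (c2 * r ^ N)) :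
    m {w} = 0 := by
  have h : ∀ ε : ℝ, 0 < ε → m {w} ≤ ENNReal.ofReal ε := by
    intro ε hε
    set r : ℝ := (ε / c2) ^ (N⁻¹) with hrdef
    have hr : 0 < r := Real.rpow_pos_of_pos (div_pos hε hc2) _
    have h1 : m {w} ≤ m (ball w r) :=
      measure_mono (Set.singleton_subset_iff.2 (mem_ball_self hr))
    have h2 : c2 * r ^ N = ε := by
      have : r ^ N = ε / c2 := by
        rw [hrdef, ← Real.rpow_mul (le_of_lt (div_pos hε hc2)),
          inv_mul_cancel₀ hN.ne', Real.rpow_one]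
      rw [this]; field_simp
    calc m {w} ≤ m (ball w r) := h1
      _ ≤ ENNReal.ofReal (c2 * r ^ N) := hub r hr
      _ = ENNReal.ofReal ε := by rw [h2]
  refine le_antisymm (ENNReal.le_of_forall_pos_le_add fun ε hε _ => ?_) zero_le
  have := h ε (by exact_mod_cast hε)
  simpa using this

/-- Integral of |g| over a ball is controlled by the maximal function. -/
lemma maximal_ball_bound {X : Type*} [MetricSpace X] [MeasurableSpace X]
    (m : Measure X) (g : X → ℝ) (w : X) (r : ℝ) (B : ℝ≥0∞)
    (hub : m (ball w r) ≤ B) (hB : B ≠ ⊤) :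
    ∫⁻ z in ball w r, ENNReal.ofReal |g z| ∂m ≤ B * maximalFn m g w := by
  rcases le_or_gt r 0 with hr | hr
  · rw [ball_eq_empty.2 hr]
    simp
  set I := ∫⁻ z in ball w r, ENNReal.ofReal |g z| ∂m with hI
  rcases eq_or_ne (m (ball w r)) 0 with h0 | h0
  · have : I = 0 := by
      rw [hI, setLIntegral_measure_zero _ _ h0]
    rw [this]; exact zero_le
  have hfin : m (ball w r) ≠ ⊤ := (lt_of_le_of_lt hub hB.lt_top).ne
  have hM : (m (ball w r))⁻¹ * I ≤ maximalFn m g w := by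
    refine le_trans ?_ (le_iSup _ r)
    exact le_iSup (fun _ : 0 < r => (m (ball w r))⁻¹ * I) hr
  calc I = m (ball w r) * ((m (ball w r))⁻¹ * I) := by
        rw [← mul_assoc, ENNReal.mul_inv_cancel h0 hfin, one_mul]
    _ ≤ m (ball w r) * maximalFn m g w := mul_le_mul_right hM _
    _ ≤ B * maximalFn m g w := mul_le_mul_left hub _

/-- Covering lemma: every point of a punctured ball lies in a dyadic annulus. -/
lemma annuli_cover {R t : ℝ} (hR : 0 < R) (ht : 0 < t) (htR : t < R) :
    ∃ j : ℕ, R / 2 ^ (j + 1) < t ∧ t ≤ R / 2 ^ j := by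
  have h2 : (1:ℝ) < 2 := one_lt_two
  have hex : ∃ n : ℕ, R / t < 2 ^ n := pow_unbounded_of_one_lt _ h2
  classical
  set n₀ := Nat.find hex with hn₀def
  have hn₀ : R / t < 2 ^ n₀ := Nat.find_spec hex
  have hn₀pos : n₀ ≠ 0 := by
    intro h
    rw [h] at hn₀
    simp only [pow_zero] at hn₀
    have : (1:ℝ) < R / t := (one_lt_div ht).2 htR
    linarith
  obtain ⟨j, hj⟩ : ∃ j, n₀ = j + 1 := ⟨n₀ - 1, (Nat.succ_pred_eq_of_pos (Nat.pos_of_ne_zero hn₀pos)).symm⟩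
  have hmin : ¬ (R / t < 2 ^ j) := Nat.find_min hex (by omega)
  push_neg at hmin
  refine ⟨j, ?_, ?_⟩
  · rw [div_lt_iff₀ (by positivity)]
    rw [← hj]
    rw [div_lt_iff₀ ht] at hn₀
    linarith [hn₀]
  · rw [le_div_iff₀ (by positivity)]
    rw [le_div_iff₀ ht] at hmin
    linarith [hmin]

/-- Covering lemma for the exterior annuli. -/
lemma annuli_cover' {R t : ℝ} (hR : 0 < R) (htR : R ≤ t) :
    ∃ j : ℕ, R * 2 ^ j ≤ t ∧ t < R * 2 ^ (j + 1) := by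
  have h2 : (1:ℝ) < 2 := one_lt_two
  have ht : 0 < t := lt_of_lt_of_le hR htR
  have hex : ∃ n : ℕ, t / R < 2 ^ n := pow_unbounded_of_one_lt _ h2
  classical
  set n₀ := Nat.find hex with hn₀def
  have hn₀ : t / R < 2 ^ n₀ := Nat.find_spec hex
  have hn₀pos : n₀ ≠ 0 := by
    intro h
    rw [h] at hn₀
    simp only [pow_zero] at hn₀
    have : (1:ℝ) ≤ t / R := (one_le_div hR).2 htR
    linarith
  obtain ⟨j, hj⟩ : ∃ j, n₀ = j + 1 := ⟨n₀ - 1, (Nat.succ_pred_eq_of_pos (Nat.pos_of_ne_zero hn₀pos)).symm⟩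
  have hmin : ¬ (t / R < 2 ^ j) := Nat.find_min hex (by omega)
  push_neg at hmin
  refine ⟨j, ?_, ?_⟩
  · rw [le_div_iff₀ hR] at hmin
    linarith [hmin]
  · rw [div_lt_iff₀ hR] at hn₀
    rw [← hj]
    linarith [hn₀]

/-- Interior annuli estimate. -/
lemma annuliA {X : Type*} [MetricSpace X] [MeasurableSpace X] [BorelSpace X]
    (m : Measure X) (g : X → ℝ) (N c2 α : ℝ) (hN : 0 < N) (hc2 : 0 < c2) (hα : 0 < α)
    (w : X) (hub : ∀ r : ℝ, 0 < r → m (ball w r) ≤ ENNReal.ofReal (c2 * r ^ N))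
    (R : ℝ) (hR : 0 < R) :
    ∫⁻ z in ball w R, ENNReal.ofReal |g z| * ENNReal.ofReal (dist w z ^ (α - N)) ∂m
      ≤ ENNReal.ofReal (c2 * 4 ^ N * (1 - 2 ^ (-α))⁻¹ * R ^ α) * maximalFn m g w := by
  set M := maximalFn m g w with hM
  set F := fun z => ENNReal.ofReal |g z| * ENNReal.ofReal (dist w z ^ (α - N)) with hF
  set r : ℕ → ℝ := fun j => R / 2 ^ j with hr
  have hrpos : ∀ j, 0 < r j := fun j => by positivity
  set A : ℕ → Set X := fun j => {z | r j / 2 < dist w z ∧ dist w z ≤ r j} with hA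
  -- coverage
  have hcover : ball w R ⊆ (⋃ j, A j) ∪ {w} := by
    intro z hz
    rcases eq_or_ne z w with hzw | hzw
    · exact Or.inr (by simp [hzw])
    · left
      have ht : 0 < dist w z := dist_pos.2 (Ne.symm hzw)
      have htR : dist w z < R := by rwa [mem_ball, dist_comm] at hz
      obtain ⟨j, h1, h2⟩ := annuli_cover hR ht htR
      refine Set.mem_iUnion.2 ⟨j, ?_, h2⟩
      have : r j / 2 = R / 2 ^ (j + 1) := by
        rw [hr]; simp only []; rw [div_div, ← pow_succ]
      rw [this]; exact h1
  -- null singleton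
  have hw0 : m {w} = 0 := null_single m N c2 hN hc2 w hub
  -- main splitting
  have hsplit : ∫⁻ z in ball w R, F z ∂m ≤ ∑' j, ∫⁻ z in A j, F z ∂m := by
    calc ∫⁻ z in ball w R, F z ∂m ≤ ∫⁻ z in (⋃ j, A j) ∪ {w}, F z ∂m :=
          lintegral_mono_set hcover
      _ ≤ (∫⁻ z in ⋃ j, A j, F z ∂m) + ∫⁻ z in {w}, F z ∂m := lintegral_union_le _ _ _
      _ = ∫⁻ z in ⋃ j, A j, F z ∂m := by rw [setLIntegral_measure_zero _ _ hw0, add_zero]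
      _ ≤ ∑' j, ∫⁻ z in A j, F z ∂m := lintegral_iUnion_le _ _
  -- per-annulus estimate
  have hann : ∀ j, ∫⁻ z in A j, F z ∂m
      ≤ ENNReal.ofReal (c2 * 4 ^ N * R ^ α * ((2:ℝ) ^ (-α)) ^ j) * M := by
    intro j
    have hAm : MeasurableSet (A j) := by
      have h1 : Measurable fun z : X => dist w z :=
        (continuous_const.dist continuous_id).measurable
      exact (measurableSet_lt measurable_const h1).inter (measurableSet_le h1 measurable_const)
    have hbd : ∀ z ∈ A j, F z ≤ ENNReal.ofReal |g z| *
        ENNReal.ofReal ((r j) ^ α * (r j / 2) ^ (-N)) := by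
      intro z hz
      obtain ⟨hz1, hz2⟩ := hz
      have ht : 0 < dist w z := lt_trans (by positivity) hz1
      have h1 : dist w z ^ (α - N) ≤ (r j) ^ α * (r j / 2) ^ (-N) := by
        have e : dist w z ^ (α - N) = dist w z ^ α * dist w z ^ (-N) := by
          rw [← Real.rpow_add ht, sub_eq_add_neg]
        rw [e]
        exact mul_le_mul (Real.rpow_le_rpow ht.le hz2 hα.le)
          (Real.rpow_le_rpow_of_nonpos (by positivity) hz1.le (neg_nonpos.2 hN.le))
          (Real.rpow_nonneg ht.le _) (Real.rpow_nonneg (by positivity) _)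
      exact mul_le_mul_right (ENNReal.ofReal_le_ofReal h1) _
    have step1 : ∫⁻ z in A j, F z ∂m ≤
        ∫⁻ z in A j, ENNReal.ofReal |g z| * ENNReal.ofReal ((r j) ^ α * (r j / 2) ^ (-N)) ∂m :=
      lintegral_mono_ae ((ae_restrict_of_forall_mem hAm hbd))
    have step2 : ∫⁻ z in A j, ENNReal.ofReal |g z| *
          ENNReal.ofReal ((r j) ^ α * (r j / 2) ^ (-N)) ∂m
        = ENNReal.ofReal ((r j) ^ α * (r j / 2) ^ (-N)) *
          ∫⁻ z in A j, ENNReal.ofReal |g z| ∂m := by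
      rw [lintegral_mul_const' _ _ ENNReal.ofReal_ne_top, mul_comm]
    have hsub : A j ⊆ ball w (2 * r j) := by
      intro z hz
      rw [mem_ball, dist_comm]
      calc dist w z ≤ r j := hz.2
        _ < 2 * r j := by linarith [hrpos j]
    have step3 : ∫⁻ z in A j, ENNReal.ofReal |g z| ∂m
        ≤ ENNReal.ofReal (c2 * (2 * r j) ^ N) * M := by
      refine le_trans (lintegral_mono_set hsub) ?_
      exact maximal_ball_bound m g w _ _ (hub _ (by positivity)) ENNReal.ofReal_ne_top
    have key : (r j) ^ α * (r j / 2) ^ (-N) * (c2 * (2 * r j) ^ N)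
        = c2 * 4 ^ N * R ^ α * ((2:ℝ) ^ (-α)) ^ j := by
      have hrj : (0:ℝ) < r j := hrpos j
      rw [Real.div_rpow hrj.le (by norm_num : (0:ℝ) ≤ 2),
        Real.mul_rpow (by norm_num : (0:ℝ) ≤ 2) hrj.le,
        Real.rpow_neg hrj.le, Real.rpow_neg (by norm_num : (0:ℝ) ≤ 2)]
      have h4 : (4:ℝ) ^ N = 2 ^ N * 2 ^ N := by
        rw [← Real.mul_rpow (by norm_num) (by norm_num)]; norm_num
      have hrjα : (r j) ^ α = R ^ α * ((2:ℝ) ^ (-α)) ^ j := by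
        rw [hr]
        simp only []
        rw [div_eq_mul_inv, Real.mul_rpow hR.le (by positivity),
          ← Real.rpow_natCast (2:ℝ) j, ← Real.rpow_neg (by norm_num : (0:ℝ) ≤ 2),
          ← Real.rpow_natCast ((2:ℝ) ^ (-α)) j,
          ← Real.rpow_mul (by norm_num : (0:ℝ) ≤ 2),
          ← Real.rpow_mul (by norm_num : (0:ℝ) ≤ 2)]
        ring_nf
      rw [hrjα, h4]
      have h2N : (0:ℝ) < (2:ℝ) ^ N := Real.rpow_pos_of_pos (by norm_num) _
      have hrjN : (0:ℝ) < (r j) ^ N := Real.rpow_pos_of_pos hrj _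
      field_simp
    calc ∫⁻ z in A j, F z ∂m
        ≤ ENNReal.ofReal ((r j) ^ α * (r j / 2) ^ (-N)) *
            ∫⁻ z in A j, ENNReal.ofReal |g z| ∂m := step2 ▸ step1
      _ ≤ ENNReal.ofReal ((r j) ^ α * (r j / 2) ^ (-N)) *
            (ENNReal.ofReal (c2 * (2 * r j) ^ N) * M) := mul_le_mul_right step3 _
      _ = ENNReal.ofReal ((r j) ^ α * (r j / 2) ^ (-N) * (c2 * (2 * r j) ^ N)) * M := by
          rw [← mul_assoc, ← ENNReal.ofReal_mul (by positivity)]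
      _ = ENNReal.ofReal (c2 * 4 ^ N * R ^ α * ((2:ℝ) ^ (-α)) ^ j) * M := by rw [key]
  -- sum up
  have hs1 : ((2:ℝ) ^ (-α)) < 1 := Real.rpow_lt_one_of_one_lt_of_neg one_lt_two (by linarith)
  have hs0 : (0:ℝ) ≤ (2:ℝ) ^ (-α) := Real.rpow_nonneg (by norm_num) _
  calc ∫⁻ z in ball w R, F z ∂m ≤ ∑' j, ∫⁻ z in A j, F z ∂m := hsplit
    _ ≤ ∑' j : ℕ, ENNReal.ofReal (c2 * 4 ^ N * R ^ α * ((2:ℝ) ^ (-α)) ^ j) * M :=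
        ENNReal.tsum_le_tsum hann
    _ = ∑' j : ℕ, (ENNReal.ofReal (c2 * 4 ^ N * R ^ α) * M) *
          (ENNReal.ofReal ((2:ℝ) ^ (-α))) ^ j := by
        congr 1; funext j
        rw [ENNReal.ofReal_mul (by positivity), ENNReal.ofReal_pow hs0]
        ring
    _ = (ENNReal.ofReal (c2 * 4 ^ N * R ^ α) * M) * (1 - ENNReal.ofReal ((2:ℝ) ^ (-α)))⁻¹ := by
        rw [ENNReal.tsum_mul_left, ENNReal.tsum_geometric]
    _ = ENNReal.ofReal (c2 * 4 ^ N * (1 - 2 ^ (-α))⁻¹ * R ^ α) * M := by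
        have e1 : (1 : ℝ≥0∞) - ENNReal.ofReal ((2:ℝ) ^ (-α)) =
            ENNReal.ofReal (1 - (2:ℝ) ^ (-α)) := by
          rw [ENNReal.ofReal_sub _ hs0, ENNReal.ofReal_one]
        rw [e1, ← ENNReal.ofReal_inv_of_pos (by linarith), mul_right_comm,
          ← ENNReal.ofReal_mul (by positivity)]
        congr 2
        ring

/-- Exterior annuli estimate. -/
lemma annuliB {X : Type*} [MetricSpace X] [MeasurableSpace X] [BorelSpace X]
    (m : Measure X) (g : X → ℝ) (N c2 α : ℝ) (hN : 0 < N) (hc2 : 0 < c2) (hα1 : α < 1)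
    (w : X) (hub : ∀ r : ℝ, 0 < r → m (ball w r) ≤ ENNReal.ofReal (c2 * r ^ N))
    (R : ℝ) (hR : 0 < R) :
    ∫⁻ z in (ball w R)ᶜ, ENNReal.ofReal |g z| * ENNReal.ofReal (dist w z ^ (α - N - 1)) ∂m
      ≤ ENNReal.ofReal (c2 * 2 ^ N * (1 - 2 ^ (α - 1))⁻¹ * R ^ (α - 1)) * maximalFn m g w := by
  set M := maximalFn m g w with hM
  set F := fun z => ENNReal.ofReal |g z| * ENNReal.ofReal (dist w z ^ (α - N - 1)) with hF
  set r : ℕ → ℝ := fun j => R * 2 ^ j with hr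
  have hrpos : ∀ j, 0 < r j := fun j => by positivity
  set A : ℕ → Set X := fun j => {z | r j ≤ dist w z ∧ dist w z < 2 * r j} with hA
  have hcover : (ball w R)ᶜ ⊆ ⋃ j, A j := by
    intro z hz
    have ht : R ≤ dist w z := by
      rw [Set.mem_compl_iff, mem_ball, not_lt, dist_comm] at hz
      exact hz
    obtain ⟨j, h1, h2⟩ := annuli_cover' hR ht
    refine Set.mem_iUnion.2 ⟨j, h1, ?_⟩
    have : 2 * r j = R * 2 ^ (j + 1) := by rw [hr]; simp only []; rw [pow_succ]; ring
    rw [this]; exact h2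
  have hsplit : ∫⁻ z in (ball w R)ᶜ, F z ∂m ≤ ∑' j, ∫⁻ z in A j, F z ∂m :=
    le_trans (lintegral_mono_set hcover) (lintegral_iUnion_le _ _)
  have hann : ∀ j, ∫⁻ z in A j, F z ∂m
      ≤ ENNReal.ofReal (c2 * 2 ^ N * R ^ (α - 1) * ((2:ℝ) ^ (α - 1)) ^ j) * M := by
    intro j
    have hAm : MeasurableSet (A j) := by
      have h1 : Measurable fun z : X => dist w z :=
        (continuous_const.dist continuous_id).measurable
      exact (measurableSet_le measurable_const h1).inter (measurableSet_lt h1 measurable_const)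
    have hbd : ∀ z ∈ A j, F z ≤ ENNReal.ofReal |g z| *
        ENNReal.ofReal ((r j) ^ (α - N - 1)) := by
      intro z hz
      obtain ⟨hz1, hz2⟩ := hz
      have h1 : dist w z ^ (α - N - 1) ≤ (r j) ^ (α - N - 1) :=
        Real.rpow_le_rpow_of_nonpos (hrpos j) hz1 (by linarith)
      exact mul_le_mul_right (ENNReal.ofReal_le_ofReal h1) _
    have step1 : ∫⁻ z in A j, F z ∂m ≤
        ∫⁻ z in A j, ENNReal.ofReal |g z| * ENNReal.ofReal ((r j) ^ (α - N - 1)) ∂m :=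
      lintegral_mono_ae ((ae_restrict_of_forall_mem hAm hbd))
    have step2 : ∫⁻ z in A j, ENNReal.ofReal |g z| * ENNReal.ofReal ((r j) ^ (α - N - 1)) ∂m
        = ENNReal.ofReal ((r j) ^ (α - N - 1)) * ∫⁻ z in A j, ENNReal.ofReal |g z| ∂m := by
      rw [lintegral_mul_const' _ _ ENNReal.ofReal_ne_top, mul_comm]
    have hsub : A j ⊆ ball w (2 * r j) := by
      intro z hz
      rw [mem_ball, dist_comm]
      exact hz.2
    have step3 : ∫⁻ z in A j, ENNReal.ofReal |g z| ∂m
        ≤ ENNReal.ofReal (c2 * (2 * r j) ^ N) * M := by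
      refine le_trans (lintegral_mono_set hsub) ?_
      exact maximal_ball_bound m g w _ _ (hub _ (by positivity)) ENNReal.ofReal_ne_top
    have key : (r j) ^ (α - N - 1) * (c2 * (2 * r j) ^ N)
        = c2 * 2 ^ N * R ^ (α - 1) * ((2:ℝ) ^ (α - 1)) ^ j := by
      have hrj : (0:ℝ) < r j := hrpos j
      rw [Real.mul_rpow (by norm_num : (0:ℝ) ≤ 2) hrj.le]
      have e1 : (r j) ^ (α - N - 1) * (r j) ^ N = (r j) ^ (α - 1) := by
        rw [← Real.rpow_add hrj]; congr 1; ring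
      have e2 : (r j) ^ (α - 1) = R ^ (α - 1) * ((2:ℝ) ^ (α - 1)) ^ j := by
        rw [hr]
        simp only []
        rw [Real.mul_rpow hR.le (by positivity),
          ← Real.rpow_natCast (2:ℝ) j,
          ← Real.rpow_natCast ((2:ℝ) ^ (α - 1)) j,
          ← Real.rpow_mul (by norm_num : (0:ℝ) ≤ 2),
          ← Real.rpow_mul (by norm_num : (0:ℝ) ≤ 2)]
        congr 1
        ring
      calc (r j) ^ (α - N - 1) * (c2 * (2 ^ N * (r j) ^ N))
          = c2 * 2 ^ N * ((r j) ^ (α - N - 1) * (r j) ^ N) := by ring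
        _ = c2 * 2 ^ N * R ^ (α - 1) * ((2:ℝ) ^ (α - 1)) ^ j := by rw [e1, e2]; ring
    calc ∫⁻ z in A j, F z ∂m
        ≤ ENNReal.ofReal ((r j) ^ (α - N - 1)) * ∫⁻ z in A j, ENNReal.ofReal |g z| ∂m :=
          step2 ▸ step1
      _ ≤ ENNReal.ofReal ((r j) ^ (α - N - 1)) *
            (ENNReal.ofReal (c2 * (2 * r j) ^ N) * M) := mul_le_mul_right step3 _
      _ = ENNReal.ofReal ((r j) ^ (α - N - 1) * (c2 * (2 * r j) ^ N)) * M := by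
          rw [← mul_assoc, ← ENNReal.ofReal_mul (by positivity)]
      _ = ENNReal.ofReal (c2 * 2 ^ N * R ^ (α - 1) * ((2:ℝ) ^ (α - 1)) ^ j) * M := by rw [key]
  have hs1 : ((2:ℝ) ^ (α - 1)) < 1 :=
    Real.rpow_lt_one_of_one_lt_of_neg one_lt_two (by linarith)
  have hs0 : (0:ℝ) ≤ (2:ℝ) ^ (α - 1) := Real.rpow_nonneg (by norm_num) _
  calc ∫⁻ z in (ball w R)ᶜ, F z ∂m ≤ ∑' j, ∫⁻ z in A j, F z ∂m := hsplit
    _ ≤ ∑' j : ℕ, ENNReal.ofReal (c2 * 2 ^ N * R ^ (α - 1) * ((2:ℝ) ^ (α - 1)) ^ j) * M :=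
        ENNReal.tsum_le_tsum hann
    _ = ∑' j : ℕ, (ENNReal.ofReal (c2 * 2 ^ N * R ^ (α - 1)) * M) *
          (ENNReal.ofReal ((2:ℝ) ^ (α - 1))) ^ j := by
        congr 1; funext j
        rw [ENNReal.ofReal_mul (by positivity), ENNReal.ofReal_pow hs0]
        ring
    _ = (ENNReal.ofReal (c2 * 2 ^ N * R ^ (α - 1)) * M) *
          (1 - ENNReal.ofReal ((2:ℝ) ^ (α - 1)))⁻¹ := by
        rw [ENNReal.tsum_mul_left, ENNReal.tsum_geometric]
    _ = ENNReal.ofReal (c2 * 2 ^ N * (1 - 2 ^ (α - 1))⁻¹ * R ^ (α - 1)) * M := by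
        have e1 : (1 : ℝ≥0∞) - ENNReal.ofReal ((2:ℝ) ^ (α - 1)) =
            ENNReal.ofReal (1 - (2:ℝ) ^ (α - 1)) := by
          rw [ENNReal.ofReal_sub _ hs0, ENNReal.ofReal_one]
        rw [e1, ← ENNReal.ofReal_inv_of_pos (by linarith), mul_right_comm,
          ← ENNReal.ofReal_mul (by positivity)]
        congr 2
        ring

/-- If `f = J_α g` is finite a.e., `0 < α < 1`, then for a.e. pair `x, y`,
`|f(x)-f(y)| ≤ C' d(x,y)^α (Mg(x) + Mg(y))`. -/
theorem bessel_potential_pointwise_hajlasz {X : Type*} [MetricSpace X] [MeasurableSpace X]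
    [BorelSpace X]
    (m : Measure X) (N c1 c2 α C : ℝ) (hN : 0 < N) (hc1 : 0 < c1) (hc2 : 0 < c2)
    (hA : ∀ (x : X) (r : ℝ), 0 < r →
      ENNReal.ofReal (c1 * r ^ N) ≤ m (ball x r) ∧ m (ball x r) ≤ ENNReal.ofReal (c2 * r ^ N))
    (hinf : m Set.univ = ⊤)
    (hα : 0 < α) (hα1 : α < 1) (hC : 0 < C)
    (k : X → X → ℝ)
    (hk_nn : ∀ x y, 0 ≤ k x y)
    (hk_norm : ∀ x : X, (∫ z, k x z ∂m) = 1)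
    (hk_size : ∀ x y : X, x ≠ y → k x y ≤ C * dist x y ^ (α - N))
    (hk_smooth : ∀ x y z : X, x ≠ z → y ≠ z →
      |k x z - k y z| ≤ C * dist x y * (min (dist x z) (dist y z)) ^ (-(N + 1 - α))) :
    ∃ C' : ℝ, 0 < C' ∧ ∀ (g f : X → ℝ), LocallyIntegrable g m →
      (∀ x, Integrable (fun z => g z * k x z) m) →
      (∀ x, f x = ∫ z, g z * k x z ∂m) →
      ∀ᵐ p ∂(m.prod m),
        ENNReal.ofReal |f p.1 - f p.2| ≤
          ENNReal.ofReal (C' * dist p.1 p.2 ^ α) * (maximalFn m g p.1 + maximalFn m g p.2) := by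
  have hub : ∀ w : X, ∀ r : ℝ, 0 < r → m (ball w r) ≤ ENNReal.ofReal (c2 * r ^ N) :=
    fun w r hr => (hA w r hr).2
  have hsA1 : ((2:ℝ) ^ (-α)) < 1 :=
    Real.rpow_lt_one_of_one_lt_of_neg one_lt_two (by linarith)
  have hsA0 : (0:ℝ) < (2:ℝ) ^ (-α) := Real.rpow_pos_of_pos (by norm_num) _
  have hsB1 : ((2:ℝ) ^ (α - 1)) < 1 :=
    Real.rpow_lt_one_of_one_lt_of_neg one_lt_two (by linarith)
  have hsB0 : (0:ℝ) < (2:ℝ) ^ (α - 1) := Real.rpow_pos_of_pos (by norm_num) _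
  have hiA : (0:ℝ) < (1 - (2:ℝ) ^ (-α))⁻¹ := by
    apply inv_pos.2; linarith
  have hiB : (0:ℝ) < (1 - (2:ℝ) ^ (α - 1))⁻¹ := by
    apply inv_pos.2; linarith
  set KA : ℝ := c2 * 4 ^ N * (1 - (2:ℝ) ^ (-α))⁻¹ with hKAdef
  set KB : ℝ := c2 * 2 ^ N * (1 - (2:ℝ) ^ (α - 1))⁻¹ with hKBdef
  have hKA : 0 < KA := by
    rw [hKAdef]
    have h4 : (0:ℝ) < 4 ^ N := Real.rpow_pos_of_pos (by norm_num) _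
    positivity
  have hKB : 0 < KB := by
    rw [hKBdef]
    have h2 : (0:ℝ) < 2 ^ N := Real.rpow_pos_of_pos (by norm_num) _
    positivity
  set K1 : ℝ := C * KA * 2 ^ α with hK1def
  set K2 : ℝ := C * KA * 3 ^ α with hK2def
  set K3 : ℝ := C * 2 ^ (N + 1 - α) * KB * 2 ^ (α - 1) with hK3def
  have h2α : (0:ℝ) < 2 ^ α := Real.rpow_pos_of_pos (by norm_num) _
  have h3α : (0:ℝ) < 3 ^ α := Real.rpow_pos_of_pos (by norm_num) _
  have h2N1 : (0:ℝ) < 2 ^ (N + 1 - α) := Real.rpow_pos_of_pos (by norm_num) _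
  have hK1 : 0 < K1 := by rw [hK1def]; positivity
  have hK2 : 0 < K2 := by rw [hK2def]; positivity
  have hK3 : 0 < K3 := by rw [hK3def]; positivity
  refine ⟨K1 + K2 + K3, by positivity, ?_⟩
  intro g f hg hgk hf
  refine ae_of_all _ ?_
  rintro ⟨x, y⟩
  simp only
  rcases eq_or_ne x y with hxy | hxy
  · subst hxy
    rw [sub_self, abs_zero, ENNReal.ofReal_zero]
    exact zero_le
  set d := dist x y with hd
  have hd0 : 0 < d := dist_pos.2 hxy
  set R : ℝ := 2 * d with hR
  have hR0 : 0 < R := by rw [hR]; linarith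
  set Mx := maximalFn m g x with hMx
  set My := maximalFn m g y with hMy
  set G : X → ℝ≥0∞ := fun z => ENNReal.ofReal |g z| with hG
  -- Step 1
  have step1 : ENNReal.ofReal |f x - f y| ≤
      ∫⁻ z, G z * ENNReal.ofReal |k x z - k y z| ∂m := by
    rw [hf x, hf y, ← integral_sub (hgk x) (hgk y)]
    calc ENNReal.ofReal |∫ z, (g z * k x z - g z * k y z) ∂m|
        = (‖∫ z, (g z * k x z - g z * k y z) ∂m‖₊ : ℝ≥0∞) := by
          rw [← Real.norm_eq_abs, ofReal_norm_eq_enorm, enorm_eq_nnnorm]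
      _ ≤ ∫⁻ z, (‖g z * k x z - g z * k y z‖₊ : ℝ≥0∞) ∂m :=
          enorm_integral_le_lintegral_enorm _
      _ = ∫⁻ z, G z * ENNReal.ofReal |k x z - k y z| ∂m := by
          congr 1; funext z
          rw [← enorm_eq_nnnorm, ← ofReal_norm_eq_enorm, Real.norm_eq_abs, ← mul_sub, abs_mul,
            ENNReal.ofReal_mul (abs_nonneg _)]
  -- a.e. facts
  have haex : ∀ᵐ z ∂m, z ≠ x := by
    have h := null_single m N c2 hN hc2 x (hub x)
    rw [ae_iff]
    have e : {a : X | ¬ a ≠ x} = {x} := by ext a; simp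
    rw [e]; exact h
  have haey : ∀ᵐ z ∂m, z ≠ y := by
    have h := null_single m N c2 hN hc2 y (hub y)
    rw [ae_iff]
    have e : {a : X | ¬ a ≠ y} = {y} := by ext a; simp
    rw [e]; exact h
  -- choice of the splitting set
  obtain ⟨S, hSm, hS1, hS2⟩ : ∃ S : Set X, MeasurableSet S ∧
      (∀ z ∈ S, z ≠ x → z ≠ y → dist y z ^ (α - N) ≤ dist x z ^ (α - N)) ∧
      (∀ z ∉ S, z ≠ x → z ≠ y → dist x z ^ (α - N) ≤ dist y z ^ (α - N)) := by
    have hdmx : Measurable fun z : X => dist x z :=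
      (continuous_const.dist continuous_id).measurable
    have hdmy : Measurable fun z : X => dist y z :=
      (continuous_const.dist continuous_id).measurable
    rcases le_or_gt (α - N) 0 with hγ | hγ
    · refine ⟨{z | dist x z ≤ dist y z}, measurableSet_le hdmx hdmy, ?_, ?_⟩
      · intro z hz hzx _
        exact Real.rpow_le_rpow_of_nonpos (dist_pos.2 (Ne.symm hzx)) hz hγ
      · intro z hz _ hzy
        rw [Set.mem_setOf_eq, not_le] at hz
        exact Real.rpow_le_rpow_of_nonpos (dist_pos.2 (Ne.symm hzy)) hz.le hγ
    · refine ⟨{z | dist y z ≤ dist x z}, measurableSet_le hdmy hdmx, ?_, ?_⟩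
      · intro z hz _ _
        exact Real.rpow_le_rpow dist_nonneg hz hγ.le
      · intro z hz _ _
        rw [Set.mem_setOf_eq, not_le] at hz
        exact Real.rpow_le_rpow dist_nonneg hz.le hγ.le
  have hballm : MeasurableSet (ball x R) := measurableSet_ball
  -- Term 1
  have hT1 : ∫⁻ z in S ∩ ball x R, G z * ENNReal.ofReal |k x z - k y z| ∂m
      ≤ ENNReal.ofReal (C * (KA * R ^ α)) * Mx := by
    have hae : ∀ᵐ z ∂(m.restrict (S ∩ ball x R)),
        G z * ENNReal.ofReal |k x z - k y z| ≤
          G z * ENNReal.ofReal (C * dist x z ^ (α - N)) := by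
      have hmem : ∀ᵐ z ∂(m.restrict (S ∩ ball x R)), z ∈ S ∩ ball x R :=
        ae_restrict_of_forall_mem (hSm.inter hballm) (fun z hz => hz)
      filter_upwards [hmem, ae_restrict_of_ae haex, ae_restrict_of_ae haey]
        with z hz hzx hzy
      apply mul_le_mul_right
      apply ENNReal.ofReal_le_ofReal
      have h1 : k x z ≤ C * dist x z ^ (α - N) := hk_size x z (Ne.symm hzx)
      have h2 : k y z ≤ C * dist y z ^ (α - N) := hk_size y z (Ne.symm hzy)
      have h3 : C * dist y z ^ (α - N) ≤ C * dist x z ^ (α - N) :=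
        mul_le_mul_of_nonneg_left (hS1 z hz.1 hzx hzy) hC.le
      rw [abs_sub_le_iff]
      constructor
      · linarith [hk_nn y z]
      · linarith [hk_nn x z]
    calc ∫⁻ z in S ∩ ball x R, G z * ENNReal.ofReal |k x z - k y z| ∂m
        ≤ ∫⁻ z in S ∩ ball x R, G z * ENNReal.ofReal (C * dist x z ^ (α - N)) ∂m :=
          lintegral_mono_ae hae
      _ ≤ ∫⁻ z in ball x R, G z * ENNReal.ofReal (C * dist x z ^ (α - N)) ∂m :=
          lintegral_mono_set Set.inter_subset_right
      _ = ENNReal.ofReal C *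
            ∫⁻ z in ball x R, G z * ENNReal.ofReal (dist x z ^ (α - N)) ∂m := by
          rw [← lintegral_const_mul' _ _ ENNReal.ofReal_ne_top]
          congr 1; funext z
          rw [ENNReal.ofReal_mul hC.le]; ring
      _ ≤ ENNReal.ofReal C * (ENNReal.ofReal (KA * R ^ α) * Mx) := by
          apply mul_le_mul_right
          have := annuliA m g N c2 α hN hc2 hα x (hub x) R hR0
          rw [hKAdef]
          exact this
      _ = ENNReal.ofReal (C * (KA * R ^ α)) * Mx := by
          rw [← mul_assoc, ← ENNReal.ofReal_mul hC.le]
  -- Term 2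
  have hT2 : ∫⁻ z in Sᶜ ∩ ball x R, G z * ENNReal.ofReal |k x z - k y z| ∂m
      ≤ ENNReal.ofReal (C * (KA * (3 * d) ^ α)) * My := by
    have hsub2 : Sᶜ ∩ ball x R ⊆ ball y (3 * d) := by
      rintro z ⟨_, hz2⟩
      rw [mem_ball] at hz2 ⊢
      have : dist z y ≤ dist z x + dist x y := dist_triangle z x y
      rw [← hd] at this
      rw [hR] at hz2
      linarith
    have hae : ∀ᵐ z ∂(m.restrict (Sᶜ ∩ ball x R)),
        G z * ENNReal.ofReal |k x z - k y z| ≤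
          G z * ENNReal.ofReal (C * dist y z ^ (α - N)) := by
      have hmem : ∀ᵐ z ∂(m.restrict (Sᶜ ∩ ball x R)), z ∈ Sᶜ ∩ ball x R :=
        ae_restrict_of_forall_mem (hSm.compl.inter hballm) (fun z hz => hz)
      filter_upwards [hmem, ae_restrict_of_ae haex, ae_restrict_of_ae haey]
        with z hz hzx hzy
      apply mul_le_mul_right
      apply ENNReal.ofReal_le_ofReal
      have h1 : k x z ≤ C * dist x z ^ (α - N) := hk_size x z (Ne.symm hzx)
      have h2 : k y z ≤ C * dist y z ^ (α - N) := hk_size y z (Ne.symm hzy)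
      have h3 : C * dist x z ^ (α - N) ≤ C * dist y z ^ (α - N) :=
        mul_le_mul_of_nonneg_left (hS2 z hz.1 hzx hzy) hC.le
      rw [abs_sub_le_iff]
      constructor
      · linarith [hk_nn y z]
      · linarith [hk_nn x z]
    calc ∫⁻ z in Sᶜ ∩ ball x R, G z * ENNReal.ofReal |k x z - k y z| ∂m
        ≤ ∫⁻ z in Sᶜ ∩ ball x R, G z * ENNReal.ofReal (C * dist y z ^ (α - N)) ∂m :=
          lintegral_mono_ae hae
      _ ≤ ∫⁻ z in ball y (3 * d), G z * ENNReal.ofReal (C * dist y z ^ (α - N)) ∂m :=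
          lintegral_mono_set hsub2
      _ = ENNReal.ofReal C *
            ∫⁻ z in ball y (3 * d), G z * ENNReal.ofReal (dist y z ^ (α - N)) ∂m := by
          rw [← lintegral_const_mul' _ _ ENNReal.ofReal_ne_top]
          congr 1; funext z
          rw [ENNReal.ofReal_mul hC.le]; ring
      _ ≤ ENNReal.ofReal C * (ENNReal.ofReal (KA * (3 * d) ^ α) * My) := by
          apply mul_le_mul_right
          have := annuliA m g N c2 α hN hc2 hα y (hub y) (3 * d) (by linarith)
          rw [hKAdef]
          exact this
      _ = ENNReal.ofReal (C * (KA * (3 * d) ^ α)) * My := by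
          rw [← mul_assoc, ← ENNReal.ofReal_mul hC.le]
  -- Term 3
  have hT3 : ∫⁻ z in (ball x R)ᶜ, G z * ENNReal.ofReal |k x z - k y z| ∂m
      ≤ ENNReal.ofReal (C * d * 2 ^ (N + 1 - α) * (KB * R ^ (α - 1))) * Mx := by
    have hbd : ∀ z ∈ (ball x R)ᶜ, G z * ENNReal.ofReal |k x z - k y z| ≤
        G z * ENNReal.ofReal (C * d * 2 ^ (N + 1 - α) * dist x z ^ (α - N - 1)) := by
      intro z hz
      have hxz : R ≤ dist x z := by
        rw [Set.mem_compl_iff, mem_ball, not_lt, dist_comm] at hz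
        exact hz
      have hxz0 : 0 < dist x z := lt_of_lt_of_le hR0 hxz
      have hyz : dist x z / 2 ≤ dist y z := by
        have h4 : dist x z ≤ dist x y + dist y z := dist_triangle x y z
        rw [← hd] at h4
        rw [hR] at hxz
        linarith
      have hzx : x ≠ z := fun h => by rw [h] at hxz0; simp at hxz0
      have hzy : y ≠ z := by
        intro h
        rw [h] at hyz
        rw [dist_self] at hyz
        rw [hR] at hxz
        linarith
      apply mul_le_mul_right
      apply ENNReal.ofReal_le_ofReal
      have h5 := hk_smooth x y z hzx hzy
      rw [← hd] at h5
      have hmin : dist x z / 2 ≤ min (dist x z) (dist y z) :=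
        le_min (by linarith) hyz
      have h6 : (min (dist x z) (dist y z)) ^ (-(N + 1 - α)) ≤
          (dist x z / 2) ^ (-(N + 1 - α)) :=
        Real.rpow_le_rpow_of_nonpos (by positivity) hmin (by linarith)
      have e : (dist x z / 2) ^ (-(N + 1 - α)) =
          2 ^ (N + 1 - α) * dist x z ^ (α - N - 1) := by
        have he : -(N + 1 - α) = α - N - 1 := by ring
        rw [he, Real.div_rpow dist_nonneg (by norm_num), div_eq_mul_inv,
          ← Real.rpow_neg (by norm_num : (0:ℝ) ≤ 2)]
        have he2 : -(α - N - 1) = N + 1 - α := by ring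
        rw [he2]; ring
      calc |k x z - k y z| ≤ C * d * (min (dist x z) (dist y z)) ^ (-(N + 1 - α)) := h5
        _ ≤ C * d * (dist x z / 2) ^ (-(N + 1 - α)) :=
            mul_le_mul_of_nonneg_left h6 (by positivity)
        _ = C * d * 2 ^ (N + 1 - α) * dist x z ^ (α - N - 1) := by rw [e]; ring
    calc ∫⁻ z in (ball x R)ᶜ, G z * ENNReal.ofReal |k x z - k y z| ∂m
        ≤ ∫⁻ z in (ball x R)ᶜ,
            G z * ENNReal.ofReal (C * d * 2 ^ (N + 1 - α) * dist x z ^ (α - N - 1)) ∂m :=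
          lintegral_mono_ae (ae_restrict_of_forall_mem hballm.compl hbd)
      _ = ENNReal.ofReal (C * d * 2 ^ (N + 1 - α)) *
            ∫⁻ z in (ball x R)ᶜ, G z * ENNReal.ofReal (dist x z ^ (α - N - 1)) ∂m := by
          rw [← lintegral_const_mul' _ _ ENNReal.ofReal_ne_top]
          congr 1; funext z
          rw [ENNReal.ofReal_mul (by positivity)]; ring
      _ ≤ ENNReal.ofReal (C * d * 2 ^ (N + 1 - α)) *
            (ENNReal.ofReal (KB * R ^ (α - 1)) * Mx) := by
          apply mul_le_mul_right
          have := annuliB m g N c2 α hN hc2 hα1 x (hub x) R hR0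
          rw [hKBdef]
          exact this
      _ = ENNReal.ofReal (C * d * 2 ^ (N + 1 - α) * (KB * R ^ (α - 1))) * Mx := by
          rw [← mul_assoc, ← ENNReal.ofReal_mul (by positivity)]
  -- real arithmetic
  have hdα : (0:ℝ) < d ^ α := Real.rpow_pos_of_pos hd0 _
  have e2d : ((2:ℝ) * d) ^ α = 2 ^ α * d ^ α :=
    Real.mul_rpow (by norm_num) hd0.le
  have e3d : ((3:ℝ) * d) ^ α = 3 ^ α * d ^ α :=
    Real.mul_rpow (by norm_num) hd0.le
  have ed1 : d * ((2:ℝ) * d) ^ (α - 1) = 2 ^ (α - 1) * d ^ α := by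
    rw [Real.mul_rpow (by norm_num) hd0.le]
    have : d * ((2:ℝ) ^ (α - 1) * d ^ (α - 1)) = 2 ^ (α - 1) * (d ^ (1:ℝ) * d ^ (α - 1)) := by
      rw [Real.rpow_one]; ring
    rw [this, ← Real.rpow_add hd0]
    norm_num
  have a1 : C * (KA * R ^ α) + C * d * 2 ^ (N + 1 - α) * (KB * R ^ (α - 1))
      ≤ (K1 + K2 + K3) * d ^ α := by
    have e : C * (KA * R ^ α) + C * d * 2 ^ (N + 1 - α) * (KB * R ^ (α - 1))
        = (K1 + K3) * d ^ α := by
      rw [hR, e2d, hK1def, hK3def]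
      have : C * d * 2 ^ (N + 1 - α) * (KB * (2 * d) ^ (α - 1))
          = C * 2 ^ (N + 1 - α) * KB * (d * (2 * d) ^ (α - 1)) := by ring
      rw [this, ed1]
      ring
    rw [e]
    apply mul_le_mul_of_nonneg_right _ hdα.le
    linarith
  have a2 : C * (KA * (3 * d) ^ α) ≤ (K1 + K2 + K3) * d ^ α := by
    have e : C * (KA * (3 * d) ^ α) = K2 * d ^ α := by
      rw [e3d, hK2def]; ring
    rw [e]
    apply mul_le_mul_of_nonneg_right _ hdα.le
    linarith
  -- combine
  calc ENNReal.ofReal |f x - f y|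
      ≤ ∫⁻ z, G z * ENNReal.ofReal |k x z - k y z| ∂m := step1
    _ = (∫⁻ z in ball x R, G z * ENNReal.ofReal |k x z - k y z| ∂m) +
        ∫⁻ z in (ball x R)ᶜ, G z * ENNReal.ofReal |k x z - k y z| ∂m :=
        (lintegral_add_compl _ hballm).symm
    _ = ((∫⁻ z in S ∩ ball x R, G z * ENNReal.ofReal |k x z - k y z| ∂m) +
          ∫⁻ z in Sᶜ ∩ ball x R, G z * ENNReal.ofReal |k x z - k y z| ∂m) +
        ∫⁻ z in (ball x R)ᶜ, G z * ENNReal.ofReal |k x z - k y z| ∂m := by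
        congr 1
        have h := lintegral_add_compl (μ := m.restrict (ball x R))
          (fun z => G z * ENNReal.ofReal |k x z - k y z|) hSm
        rw [Measure.restrict_restrict hSm, Measure.restrict_restrict hSm.compl] at h
        exact h.symm
    _ ≤ (ENNReal.ofReal (C * (KA * R ^ α)) * Mx +
          ENNReal.ofReal (C * (KA * (3 * d) ^ α)) * My) +
        ENNReal.ofReal (C * d * 2 ^ (N + 1 - α) * (KB * R ^ (α - 1))) * Mx :=
        add_le_add (add_le_add hT1 hT2) hT3
    _ = (ENNReal.ofReal (C * (KA * R ^ α)) +
          ENNReal.ofReal (C * d * 2 ^ (N + 1 - α) * (KB * R ^ (α - 1)))) * Mx +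
        ENNReal.ofReal (C * (KA * (3 * d) ^ α)) * My := by ring
    _ ≤ ENNReal.ofReal ((K1 + K2 + K3) * d ^ α) * Mx +
        ENNReal.ofReal ((K1 + K2 + K3) * d ^ α) * My := by
        apply add_le_add
        · apply mul_le_mul_left
          rw [← ENNReal.ofReal_add (by positivity) (by positivity)]
          exact ENNReal.ofReal_le_ofReal a1
        · exact mul_le_mul_left (ENNReal.ofReal_le_ofReal a2) _
    _ = ENNReal.ofReal ((K1 + K2 + K3) * d ^ α) * (Mx + My) := by rw [mul_add]
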